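/- If a set A has ordinal rank at most n (where n is a natural number), then F(n, A) = A; consequently F(rank(A) + m, A) = A for every natural number m whenever A is hereditarily finite. -/

import Mathlib

open ZFSet

/-- The approximation function: `F 0 A = ∅`, `F (n+1) A = {F n x | x ∈ A}`. -/
noncomputable def F : ℕ → ZFSet → ZFSet
  | 0, _ => ∅
  | n + 1, A => @ZFSet.image (F n) (Classical.allZFSetDefinable fun s => F n (s 0)) A

theorem F_eq_of_rank_le : ∀ (n : ℕ) (A : ZFSet), A.rank ≤ (n : Ordinal) → F n A = A := by
  intro n
  induction n with
  | zero =>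
    intro A h
    have : A = ∅ := by
      ext x
      simp only [ZFSet.notMem_empty, iff_false]
      intro hx
      exact absurd (lt_of_lt_of_le (ZFSet.rank_lt_of_mem hx) h) (by simp)
    rw [this]; rfl
  | succ n ih =>
    intro A h
    show @ZFSet.image (F n) (Classical.allZFSetDefinable fun s => F n (s 0)) A = A
    ext x
    rw [@ZFSet.mem_image (F n) (Classical.allZFSetDefinable fun s => F n (s 0))]
    constructor
    · rintro ⟨y, hy, rfl⟩
      have hr : y.rank ≤ (n : Ordinal) := by
        have := lt_of_lt_of_le (ZFSet.rank_lt_of_mem hy) h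
        rwa [Nat.cast_succ, Ordinal.add_one_eq_succ, Order.lt_succ_iff] at this
      rw [ih y hr]; exact hy
    · intro hx
      refine ⟨x, hx, ?_⟩
      have hr : x.rank ≤ (n : Ordinal) := by
        have := lt_of_lt_of_le (ZFSet.rank_lt_of_mem hx) h
        rwa [Nat.cast_succ, Ordinal.add_one_eq_succ, Order.lt_succ_iff] at this
      rw [ih x hr]

theorem stmt_1 :
    (∀ (n : ℕ) (A : ZFSet), A.rank ≤ (n : Ordinal) → F n A = A) ∧
    (∀ (A : ZFSet) (k : ℕ), A.rank = (k : Ordinal) → ∀ m : ℕ, F (k + m) A = A) := by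
  refine ⟨F_eq_of_rank_le, ?_⟩
  intro A k hk m
  apply F_eq_of_rank_le
  rw [hk, Nat.cast_add]
  exact le_self_add
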